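/- arXiv:2506.11793 — 3 statements merged into one kernel-verified Lean document; each statement's English description precedes it below -/
import Mathlib

section
/- Let $K$ be a field of characteristic $0$ and let $a_1,\dots,a_n$ be roots of unity in an algebraic closure of $K$ (not necessarily distinct). If $e_k(a_1,\dots,a_n) = 0$ for some $0 \le k \le n$, then $e_{n-k}(a_1,\dots,a_n) = 0$. -/
open Polynomial

lemma esymm_map_hom {R S : Type*} [CommRing R] [CommRing S] (f : R →+* S)
    (t : Multiset R) (k : ℕ) : (t.map f).esymm k = f (t.esymm k) := by
  rw [Multiset.esymm, Multiset.esymm, Multiset.powersetCard_map, map_multiset_sum,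
    Multiset.map_map, Multiset.map_map]
  congr 1
  apply Multiset.map_congr rfl
  intro x _
  show (x.map f).prod = f x.prod
  exact Multiset.prod_hom x f

lemma rev_prod {F : Type*} [Field F] (s : Multiset F) :
    ((s.map fun a => X + C a).prod).reverse = (s.map fun a => 1 + C a * X).prod := by
  induction s using Multiset.induction_on with
  | empty => simpa using Polynomial.reverse_C (1 : F)
  | cons a s ih =>
      have hX : (X : F[X]).reverse = 1 := by
        rw [← one_mul (X : F[X]), Polynomial.reverse_mul_X]
        simpa using Polynomial.reverse_C (1 : F)
      simp only [Multiset.map_cons, Multiset.prod_cons]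
      rw [Polynomial.reverse_mul_of_domain, ih, Polynomial.reverse_add_C, hX, natDegree_X,
        pow_one]

lemma esymm_reflect {F : Type*} [Field F] (s : Multiset F) (h0 : ∀ a ∈ s, a ≠ 0)
    (k : ℕ) (hk : k ≤ Multiset.card s) :
    s.esymm (Multiset.card s - k) = s.prod * (s.map (·⁻¹)).esymm k := by
  set n := Multiset.card s with hn
  set p := (s.map fun a => X + C a).prod with hp
  set q := ((s.map (·⁻¹)).map fun a => X + C a).prod with hq
  have hprod0 : s.prod ≠ 0 := Multiset.prod_ne_zero (fun h' => h0 0 h' rfl)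
  have hqrev : q.reverse = C s.prod⁻¹ * p := by
    rw [hq, rev_prod, Multiset.map_map]
    have h1 : ((s.map fun a => 1 + C a⁻¹ * X).prod)
        = (s.map fun a => C a⁻¹ * (X + C a)).prod := by
      apply congrArg
      apply Multiset.map_congr rfl
      intro a ha
      rw [mul_add, ← C_mul, inv_mul_cancel₀ (h0 a ha), map_one]
      ring
    have h2 : (Multiset.map (fun a : F => C a⁻¹) s).prod
        = C ((Multiset.map (·⁻¹) s).prod) := by
      rw [show (fun a : F => C a⁻¹) = (C : F → F[X]) ∘ (·⁻¹) from rfl, ← Multiset.map_map]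
      exact Multiset.prod_hom _ (C : F →+* F[X])
    rw [show ((fun a => 1 + C a * X) ∘ (·⁻¹)) = fun a : F => 1 + C a⁻¹ * X from rfl, h1,
      Multiset.prod_map_mul, hp, h2, Multiset.prod_map_inv]
    simp
  have hqdeg : q.natDegree = n := by
    rw [hq, natDegree_multiset_prod_of_monic]
    · simp [Function.comp_def, natDegree_X_add_C, hn]
    · intro f hf
      simp only [Multiset.mem_map] at hf
      obtain ⟨a, _, rfl⟩ := hf
      exact monic_X_add_C _
  have key : q.reverse.coeff k = q.coeff (n - k) := by
    rw [coeff_reverse, hqdeg, revAt_le hk]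
  rw [hqrev, coeff_C_mul] at key
  have hpc : p.coeff k = s.esymm (n - k) := Multiset.prod_X_add_C_coeff s hk
  have hqc : q.coeff (n - k) = (s.map (·⁻¹)).esymm k := by
    have hcard : Multiset.card (s.map (·⁻¹)) = n := by simp [hn]
    have := Multiset.prod_X_add_C_coeff (s.map (·⁻¹)) (k := n - k) (by rw [hcard]; omega)
    rw [hcard, Nat.sub_sub_self hk] at this
    exact this
  rw [hpc, hqc] at key
  rw [← key, ← mul_assoc, mul_inv_cancel₀ hprod0, one_mul]

theorem stmt2 {K : Type*} [Field K] [CharZero K]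
    (s : Multiset (AlgebraicClosure K))
    (hs : ∀ a ∈ s, ∃ m : ℕ, 0 < m ∧ a ^ m = 1)
    (k : ℕ) (hk : k ≤ Multiset.card s) (h : s.esymm k = 0) :
    s.esymm (Multiset.card s - k) = 0 := by
  classical
  haveI : CharZero (AlgebraicClosure K) :=
    charZero_of_injective_algebraMap (algebraMap K (AlgebraicClosure K)).injective
  have h0 : ∀ a ∈ s, a ≠ 0 := by
    intro a ha h0
    obtain ⟨m, hm, h1⟩ := hs a ha
    rw [h0, zero_pow hm.ne'] at h1
    exact zero_ne_one h1
  set M := (s.map orderOf).prod with hM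
  have hMne : M ≠ 0 := by
    rw [hM, Ne, Multiset.prod_eq_zero_iff]
    intro hmem
    obtain ⟨a, ha, hoa⟩ := Multiset.mem_map.mp hmem
    obtain ⟨m, hm, h1⟩ := hs a ha
    exact (orderOf_eq_zero_iff.mp hoa) (isOfFinOrder_iff_pow_eq_one.mpr ⟨m, hm, h1⟩)
  have hMpos : 0 < M := Nat.pos_of_ne_zero hMne
  have hsM : ∀ a ∈ s, a ^ M = 1 := fun a ha =>
    orderOf_dvd_iff_pow_eq_one.mp (Multiset.dvd_prod (Multiset.mem_map_of_mem _ ha))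
  haveI : NeZero M := ⟨hMne⟩
  haveI : NeZero ((M : AlgebraicClosure K)) := ⟨Nat.cast_ne_zero.mpr hMne⟩
  obtain ⟨ζ, hζ⟩ := HasEnoughRootsOfUnity.exists_primitiveRoot (AlgebraicClosure K) M
  have hζint : IsIntegral ℚ ζ := by
    refine ⟨X ^ M - C 1, monic_X_pow_sub_C 1 hMne, ?_⟩
    simp [hζ.pow_eq_one]
  set P := minpoly ℚ ζ with hP
  haveI : Fact (Irreducible P) := ⟨minpoly.irreducible hζint⟩
  have haev1 : (aeval ζ) P = 0 := minpoly.aeval ℚ ζ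
  have hζinv : IsPrimitiveRoot ζ⁻¹ M := hζ.inv
  have haev2 : (aeval ζ⁻¹) P = 0 := by
    rw [hP, ← Polynomial.cyclotomic_eq_minpoly_rat hζ hMpos, aeval_def, ← eval_map,
      map_cyclotomic]
    exact hζinv.isRoot_cyclotomic hMpos
  have hev1 : eval₂ (Algebra.ofId ℚ (AlgebraicClosure K) : ℚ →+* AlgebraicClosure K) ζ P = 0 := by
    rw [← haev1, aeval_def]; rfl
  have hev2 : eval₂ (Algebra.ofId ℚ (AlgebraicClosure K) : ℚ →+* AlgebraicClosure K) ζ⁻¹ P = 0 := by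
    rw [← haev2, aeval_def]; rfl
  set φ₁ : AdjoinRoot P →ₐ[ℚ] (AlgebraicClosure K) := AdjoinRoot.liftAlgHom P (Algebra.ofId ℚ _) ζ hev1 with hφ₁
  set φ₂ : AdjoinRoot P →ₐ[ℚ] (AlgebraicClosure K) := AdjoinRoot.liftAlgHom P (Algebra.ofId ℚ _) ζ⁻¹ hev2 with hφ₂
  have hex : ∀ a ∈ s, ∃ i : ℕ, ζ ^ i = a := fun a ha =>
    (hζ.eq_pow_of_pow_eq_one (hsM a ha)).imp fun i hi => hi.2
  set c : AlgebraicClosure K → ℕ := fun a => if h : ∃ i : ℕ, ζ ^ i = a then h.choose else 0 with hcdef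
  have hc : ∀ a ∈ s, ζ ^ (c a) = a := by
    intro a ha
    have hh := hex a ha
    simp only [hcdef, dif_pos hh]
    exact hh.choose_spec
  set t : Multiset (AdjoinRoot P) := s.map (fun a => AdjoinRoot.root P ^ (c a)) with htdef
  have ht1 : t.map φ₁ = s := by
    rw [htdef, Multiset.map_map]
    conv_rhs => rw [← Multiset.map_id s]
    apply Multiset.map_congr rfl
    intro a ha
    show φ₁ (AdjoinRoot.root P ^ c a) = a
    rw [map_pow, hφ₁]
    exact (congrArg (· ^ c a) (AdjoinRoot.liftAlgHom_root P _ ζ hev1)).trans (hc a ha)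
  have ht2 : t.map φ₂ = s.map (·⁻¹) := by
    rw [htdef, Multiset.map_map]
    apply Multiset.map_congr rfl
    intro a ha
    show φ₂ (AdjoinRoot.root P ^ c a) = a⁻¹
    rw [map_pow, hφ₂]
    exact (congrArg (· ^ c a) (AdjoinRoot.liftAlgHom_root P _ ζ⁻¹ hev2)).trans (by rw [inv_pow, hc a ha])
  have ht0 : t.esymm k = 0 := by
    have hinj : Function.Injective φ₁ := φ₁.toRingHom.injective
    apply hinj
    rw [map_zero]
    have := esymm_map_hom (φ₁ : AdjoinRoot P →+* (AlgebraicClosure K)) t k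
    simp only [AlgHom.coe_toRingHom] at this  -- align coercions
    rw [← this, ht1, h]
  have hinv0 : (s.map (·⁻¹)).esymm k = 0 := by
    have := esymm_map_hom (φ₂ : AdjoinRoot P →+* (AlgebraicClosure K)) t k
    simp only [AlgHom.coe_toRingHom] at this
    rw [← ht2, this, ht0, map_zero]
  rw [esymm_reflect s h0 k hk, hinv0, mul_zero]
end

section
/- Let $K$ be a field of characteristic $0$ and let $\Phi \in K[X]$ be a monic polynomial of degree $n$ all of whose roots (in an algebraic closure of $K$) are roots of unity. Then the support of $\Phi$ is symmetric: for every $0 \le s \le n$, the coefficient of $X^s$ in $\Phi$ is nonzero if and only if the coefficient of $X^{n-s}$ is nonzero. -/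
open Polynomial IntermediateField

private lemma reverse_multiset_prod {A : Type*} [CommRing A] [IsDomain A]
    (t : Multiset (Polynomial A)) :
    t.prod.reverse = (t.map Polynomial.reverse).prod := by
  induction t using Multiset.induction_on with
  | empty =>
    show (1 : Polynomial A).reverse = _
    rw [← Polynomial.C_1, Polynomial.reverse_C]
    simp
  | cons a s ih => simp [Polynomial.reverse_mul_of_domain, ih]

theorem stmt3 {K : Type*} [Field K] [CharZero K] (Φ : Polynomial K) (n : ℕ)
    (hmonic : Φ.Monic) (hdeg : Φ.natDegree = n)
    (hroots : ∀ z : AlgebraicClosure K, Polynomial.aeval z Φ = 0 →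
      ∃ m : ℕ, 0 < m ∧ z ^ m = 1)
    (s : ℕ) (hs : s ≤ n) :
    Φ.coeff s ≠ 0 ↔ Φ.coeff (n - s) ≠ 0 := by
  classical
  set A := AlgebraicClosure K with hA
  haveI : CharZero A := charZero_of_injective_algebraMap (algebraMap K A).injective
  set Ψ : Polynomial A := Φ.map (algebraMap K A) with hΨdef
  have hΨmonic : Ψ.Monic := hmonic.map _
  have hΨdeg : Ψ.natDegree = n := by rw [hΨdef, Polynomial.natDegree_map, hdeg]
  set R := Ψ.roots with hRdef
  have hΨprod : Ψ = (R.map fun r => X - C r).prod :=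
    (IsAlgClosed.splits _).eq_prod_roots_of_monic hΨmonic
  have hroot1 : ∀ r ∈ R, ∃ m : ℕ, 0 < m ∧ r ^ m = 1 := by
    intro r hr
    apply hroots
    have h := Polynomial.isRoot_of_mem_roots hr
    rw [hΨdef] at h
    rw [Polynomial.IsRoot, Polynomial.eval_map] at h
    rwa [Polynomial.aeval_def]
  set f : A → ℕ := fun r => if h : ∃ m : ℕ, 0 < m ∧ r ^ m = 1 then h.choose else 1 with hf
  have hfpos : ∀ r, 0 < f r := by
    intro r; rw [hf]; dsimp only; split_ifs with h
    exacts [h.choose_spec.1, one_pos]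
  have hfpow : ∀ r, (∃ m : ℕ, 0 < m ∧ r ^ m = 1) → r ^ f r = 1 := by
    intro r h; rw [hf]; dsimp only; rw [dif_pos h]; exact h.choose_spec.2
  set M : ℕ := R.toFinset.prod f with hM
  have hMpos : 0 < M := Finset.prod_pos fun r _ => hfpos r
  have hMpow : ∀ r ∈ R, r ^ M = 1 := by
    intro r hr
    obtain ⟨c, hc⟩ := Finset.dvd_prod_of_mem f (Multiset.mem_toFinset.mpr hr)
    rw [hM, hc, pow_mul, hfpow r (hroot1 r hr), one_pow]
  haveI : NeZero M := ⟨hMpos.ne'⟩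
  haveI : NeZero ((M : ℕ) : A) := ⟨Nat.cast_ne_zero.mpr hMpos.ne'⟩
  obtain ⟨ζ, hζ⟩ := HasEnoughRootsOfUnity.exists_primitiveRoot A M
  have hζint : IsIntegral ℚ ζ := (hζ.isIntegral hMpos).tower_top
  set pb := IntermediateField.adjoin.powerBasis hζint with hpb
  have hmin : minpoly ℚ pb.gen = Polynomial.cyclotomic M ℚ := by
    erw [hpb, IntermediateField.adjoin.powerBasis_gen, IntermediateField.minpoly_gen ℚ ζ,
      Polynomial.cyclotomic_eq_minpoly_rat hζ hMpos]
  have haev : Polynomial.aeval (ζ⁻¹) (minpoly ℚ pb.gen) = 0 := by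
    rw [hmin, Polynomial.aeval_def, ← Polynomial.eval_map, Polynomial.map_cyclotomic]
    exact hζ.inv.isRoot_cyclotomic hMpos
  set σ : ℚ⟮ζ⟯ →ₐ[ℚ] A := pb.lift (ζ⁻¹) haev with hσ
  have hσgen : σ pb.gen = ζ⁻¹ := pb.lift_gen _ _
  have hgenA : algebraMap ℚ⟮ζ⟯ A pb.gen = ζ := by
    rw [hpb, IntermediateField.adjoin.powerBasis_gen,
      IntermediateField.AdjoinSimple.algebraMap_gen]
  have hmem : ∀ r ∈ R, ∃ i : ℕ, ζ ^ i = r := by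
    intro r hr
    obtain ⟨i, _, h⟩ := hζ.eq_pow_of_pow_eq_one (hMpow r hr)
    exact ⟨i, h⟩
  set g : A → ℚ⟮ζ⟯ := fun r => if h : ∃ i : ℕ, ζ ^ i = r then pb.gen ^ h.choose else 1 with hg
  have hgcoe : ∀ r ∈ R, algebraMap ℚ⟮ζ⟯ A (g r) = r := by
    intro r hr
    rw [hg]; dsimp only; rw [dif_pos (hmem r hr), map_pow, hgenA]
    exact (hmem r hr).choose_spec
  have hgσ : ∀ r ∈ R, σ (g r) = r⁻¹ := by
    intro r hr
    rw [hg]; dsimp only; rw [dif_pos (hmem r hr), map_pow, hσgen, inv_pow,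
      (hmem r hr).choose_spec]
  set ΨF : Polynomial ℚ⟮ζ⟯ := (R.map fun r => X - C (g r)).prod with hΨF
  have hmapF : ΨF.map (algebraMap ℚ⟮ζ⟯ A) = Ψ := by
    rw [hΨF, Polynomial.map_multiset_prod, Multiset.map_map, hΨprod]
    congr 1
    apply Multiset.map_congr rfl
    intro r hr
    simp [Function.comp, Polynomial.map_sub, hgcoe r hr]
  set Ψinv : Polynomial A := (R.map fun r => X - C r⁻¹).prod with hΨinv
  have hmapσ : ΨF.map (σ : ℚ⟮ζ⟯ →+* A) = Ψinv := by
    rw [hΨF, hΨinv, Polynomial.map_multiset_prod, Multiset.map_map]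
    congr 1
    apply Multiset.map_congr rfl
    intro r hr
    simp [Function.comp, Polynomial.map_sub, hgσ r hr]
  have hrne : ∀ r ∈ R, r ≠ 0 := by
    intro r hr h0
    have h := hMpow r hr
    rw [h0, zero_pow hMpos.ne'] at h
    exact zero_ne_one h
  have hrev : Ψ.reverse = C ((R.map fun r => -r).prod) * Ψinv := by
    conv_lhs => rw [hΨprod]
    rw [reverse_multiset_prod, Multiset.map_map]
    have hstep : ∀ r ∈ R, Polynomial.reverse (X - C r) = C (-r) * (X - C r⁻¹) := by
      intro r hr
      have h1 : (X : Polynomial A) - C r = X + C (-r) := by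
        rw [map_neg, sub_eq_add_neg]
      have h2 : Polynomial.reverse (X : Polynomial A) = 1 := by
        rw [← one_mul (X : Polynomial A), Polynomial.reverse_mul_X, ← Polynomial.C_1,
          Polynomial.reverse_C]
      rw [h1, Polynomial.reverse_add_C, h2, Polynomial.natDegree_X, pow_one, mul_sub,
        ← Polynomial.C_mul, neg_mul, mul_inv_cancel₀ (hrne r hr), map_neg, map_neg,
        Polynomial.C_1]
      ring
    have e : Multiset.map (Polynomial.reverse ∘ fun r : A => X - C r) R =
        Multiset.map (fun r : A => C (-r) * (X - C r⁻¹)) R :=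
      Multiset.map_congr rfl fun r hr => hstep r hr
    rw [e, Multiset.prod_map_mul]
    congr 1
    rw [map_multiset_prod (Polynomial.C : A →+* Polynomial A), Multiset.map_map]
    rfl
  have hcne : (R.map fun r => -r).prod ≠ 0 := by
    rw [Ne, Multiset.prod_eq_zero_iff]
    intro h0
    obtain ⟨r, hr, hre⟩ := Multiset.mem_map.mp h0
    exact hrne r hr (by simpa using hre.symm)
  have hσinj : Function.Injective σ := RingHom.injective (σ : ℚ⟮ζ⟯ →+* A)
  have hKinj : Function.Injective (algebraMap K A) := (algebraMap K A).injective
  have hFinj : Function.Injective (algebraMap ℚ⟮ζ⟯ A) := (algebraMap ℚ⟮ζ⟯ A).injective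
  have key : ∀ k, Φ.coeff k = 0 ↔ Ψinv.coeff k = 0 := by
    intro k
    have e1 : Ψ.coeff k = algebraMap K A (Φ.coeff k) := by
      rw [hΨdef, Polynomial.coeff_map]
    have e2 : Ψ.coeff k = algebraMap ℚ⟮ζ⟯ A (ΨF.coeff k) := by
      rw [← hmapF, Polynomial.coeff_map]
    have e3 : Ψinv.coeff k = σ (ΨF.coeff k) := by
      rw [← hmapσ, Polynomial.coeff_map]; rfl
    constructor
    · intro h
      rw [e3, show ΨF.coeff k = 0 from hFinj (by rw [← e2, e1, h, map_zero, map_zero]),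
        map_zero]
    · intro h
      have hF : ΨF.coeff k = 0 := hσinj (by rw [← e3, h, map_zero])
      exact hKinj (by rw [← e1, e2, hF, map_zero, map_zero])
  have hrevc : ∀ k, Ψinv.coeff k = 0 ↔ Ψ.reverse.coeff k = 0 := by
    intro k
    have hc : Ψ.reverse.coeff k = (Multiset.map (fun r => -r) R).prod * Ψinv.coeff k := by
      rw [hrev, Polynomial.coeff_C_mul]
    rw [hc]
    constructor
    · intro h; rw [h, mul_zero]
    · intro h; exact (mul_eq_zero.mp h).resolve_left hcne
  have hback : ∀ k, Ψ.coeff k = 0 ↔ Φ.coeff k = 0 := by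
    intro k
    rw [hΨdef, Polynomial.coeff_map]
    exact ⟨fun h => hKinj (by rw [h, map_zero]), fun h => by rw [h, map_zero]⟩
  have hfin : Ψ.reverse.coeff s = Ψ.coeff (n - s) := by
    rw [Polynomial.coeff_reverse, hΨdeg, Polynomial.revAt_le hs]
  have main : Φ.coeff s = 0 ↔ Φ.coeff (n - s) = 0 := by
    rw [key s, hrevc s, hfin, hback (n - s)]
  exact not_congr main
end

section
/- Let $K$ be a field of characteristic $0$. If $\Phi_1, \dots, \Phi_t \in K[X]$ are monic polynomials each dividing $X^{\delta_i} - 1$ for positive integers $\delta_i$, then the support of the product $\prod_{i=1}^t \Phi_i$ is symmetric: letting $n = \sum_i \deg \Phi_i$, for every $0 \le s \le n$, the coefficient of $X^s$ in the product is nonzero if and only if the coefficient of $X^{n-s}$ is nonzero. -/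
open Polynomial

lemma rev_lin (a : ℂ) : (X - C a).reverse = 1 - C a * X := by
  ext k
  rw [coeff_reverse, natDegree_X_sub_C]
  match k with
  | 0 => simp [coeff_one]
  | 1 => simp [coeff_one]
  | (k+2) => simp [revAt_eq_self_of_lt (show 1 < k + 2 by omega), coeff_X, coeff_one, coeff_C]

lemma rev_multiset (R : Multiset ℂ) :
    (R.map fun r => X - C r).prod.reverse = (R.map fun r => (X - C r).reverse).prod := by
  induction R using Multiset.induction_on with
  | empty => simpa using reverse_C (1:ℂ)
  | cons a s ih => simp [reverse_mul_of_domain, ih]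

lemma aux_C {P : ℂ[X]} (hP : P.Monic) (h1 : ∀ r ∈ P.roots, ‖r‖ = 1)
    {s : ℕ} (hs : s ≤ P.natDegree) :
    P.coeff s ≠ 0 ↔ P.coeff (P.natDegree - s) ≠ 0 := by
  set n := P.natDegree
  have h0 : ∀ r ∈ P.roots, r ≠ 0 := by
    intro r hr h; have := h1 r hr; simp [h] at this
  have hsplit : P.Splits := IsAlgClosed.splits P
  have hprod : P = (P.roots.map fun r => X - C r).prod :=
    hsplit.eq_prod_roots_of_monic hP
  set c : ℂ := (P.roots.map fun r => -r).prod with hc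
  have hcne : c ≠ 0 := by
    rw [hc]
    refine Multiset.prod_ne_zero ?_
    simp only [Multiset.mem_map]
    rintro ⟨r, hr, h⟩
    exact h0 r hr (by simpa using h.symm)
  have hconj : P.map (starRingEnd ℂ) = (P.roots.map fun r => X - C r⁻¹).prod := by
    conv_lhs => rw [hprod]
    rw [Polynomial.map_multiset_prod, Multiset.map_map]
    refine congrArg Multiset.prod (Multiset.map_congr rfl ?_)
    intro r hr
    have habs : (starRingEnd ℂ) r = r⁻¹ := by
      refine eq_inv_of_mul_eq_one_left ?_
      have : r * (starRingEnd ℂ) r = ((‖r‖ : ℝ) : ℂ) ^ 2 := by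
        rw [Complex.mul_conj, ← Complex.sq_norm]; push_cast; ring
      rw [mul_comm] at this
      rw [this, h1 r hr]; norm_num
    simp [habs]
  have hrev : P.reverse = C c * P.map (starRingEnd ℂ) := by
    conv_lhs => rw [hprod, rev_multiset]
    rw [hconj]
    have : ∀ r ∈ P.roots, (X - C r).reverse = (-C r) * (X - C r⁻¹) := by
      intro r hr
      have h2 : C r * C r⁻¹ = 1 := by
        rw [← C_mul, mul_inv_cancel₀ (h0 r hr), map_one]
      rw [rev_lin]
      linear_combination -h2
    rw [Multiset.map_congr rfl this, Multiset.prod_map_mul]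
    congr 1
    rw [hc, map_multiset_prod (C : ℂ →+* ℂ[X]), Multiset.map_map]
    refine congrArg _ (Multiset.map_congr rfl fun _ _ => ?_)
    simp
  have key : ∀ k ≤ n, c * (starRingEnd ℂ) (P.coeff k) = P.coeff (n - k) := by
    intro k hk
    have := congrArg (fun q => Polynomial.coeff q k) hrev
    simpa [coeff_reverse, revAt_le (show k ≤ P.natDegree from hk), coeff_C_mul, coeff_map] using this.symm
  constructor
  · intro h
    rw [← key s hs]
    exact mul_ne_zero hcne ((_root_.map_ne_zero _).mpr h)
  · intro h
    have h2 := key (n - s) (Nat.sub_le n s)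
    rw [Nat.sub_sub_self hs] at h2
    rw [← h2]
    exact mul_ne_zero hcne ((_root_.map_ne_zero _).mpr h)

theorem stmt19 {K : Type*} [Field K] [CharZero K] (t : ℕ)
    (Φ : Fin t → Polynomial K) (δ : Fin t → ℕ)
    (hmonic : ∀ i, (Φ i).Monic) (hδ : ∀ i, 0 < δ i)
    (hdvd : ∀ i, Φ i ∣ Polynomial.X ^ (δ i) - 1)
    (n : ℕ) (hn : n = ∑ i, (Φ i).natDegree)
    (s : ℕ) (hs : s ≤ n) :
    (∏ i, Φ i).coeff s ≠ 0 ↔ (∏ i, Φ i).coeff (n - s) ≠ 0 := by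
  classical
  set P : K[X] := ∏ i, Φ i with hP
  have hPm : P.Monic := monic_prod_of_monic _ _ fun i _ => hmonic i
  have hPdeg : P.natDegree = n := by
    rw [hP, natDegree_prod _ _ fun i _ => (hmonic i).ne_zero, hn]
  set Fq : ℚ[X] := ∏ i, (X ^ δ i - 1) with hFq
  have hFqm : Fq.Monic := monic_prod_of_monic _ _ fun i _ => by
    simpa using monic_X_pow_sub_C (1 : ℚ) (hδ i).ne'
  have hFmap : Fq.map (algebraMap ℚ K) = ∏ i, (X ^ δ i - 1 : K[X]) := by
    simp [hFq, Polynomial.map_prod]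
  have hPF : P ∣ Fq.map (algebraMap ℚ K) := by
    rw [hFmap]
    exact Finset.prod_dvd_prod_of_dvd _ _ fun i _ => hdvd i
  -- descend P to the algebraic closure of ℚ in K
  set L := algebraicClosure ℚ K with hL
  have hlift : P ∈ lifts (algebraMap (integralClosure ℚ K) K) :=
    integralClosure.mem_lifts_of_monic_of_dvd_map K hFqm hPm hPF
  have hcoeff : ∀ k, P.coeff k ∈ L := by
    intro k
    obtain ⟨x, hx⟩ := (lifts_iff_coeff_lifts P).1 hlift k
    exact mem_algebraicClosure_iff'.mpr (hx ▸ x.2)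
  have hliftL : P ∈ lifts (algebraMap L K) :=
    (lifts_iff_coeff_lifts P).2 fun k => ⟨⟨P.coeff k, hcoeff k⟩, rfl⟩
  obtain ⟨P₀, hmap, hdeg₀, hm₀⟩ := lifts_and_degree_eq_and_monic hliftL hPm
  -- divisibility descends
  have hFLmap : (Fq.map (algebraMap ℚ L)).map (algebraMap L K) = Fq.map (algebraMap ℚ K) := by
    rw [Polynomial.map_map, ← IsScalarTower.algebraMap_eq]
  have hdvd₀ : P₀ ∣ Fq.map (algebraMap ℚ L) := by
    rw [← map_dvd_map' (algebraMap L K), hmap, hFLmap]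
    exact hPF
  -- embed into ℂ
  haveI : Algebra.IsAlgebraic ℚ L := algebraicClosure.isAlgebraic ℚ K
  let χ : L →ₐ[ℚ] ℂ := IsAlgClosed.lift
  set Pc : ℂ[X] := P₀.map (χ : L →+* ℂ) with hPc
  have hPcm : Pc.Monic := hm₀.map _
  have hdvdc : Pc ∣ Fq.map (algebraMap ℚ ℂ) := by
    have := Polynomial.map_dvd (χ : L →+* ℂ) hdvd₀
    rwa [Polynomial.map_map, χ.comp_algebraMap] at this
  have hroots : ∀ r ∈ Pc.roots, ‖r‖ = 1 := by
    intro r hr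
    have hFne : Fq.map (algebraMap ℚ ℂ) ≠ 0 := (hFqm.map _).ne_zero
    have hrF : r ∈ (Fq.map (algebraMap ℚ ℂ)).roots :=
      Multiset.mem_of_le (roots.le_of_dvd hFne hdvdc) hr
    have hroot : ∃ i, r ^ δ i = 1 := by
      have := (mem_roots hFne).1 hrF
      rw [hFq, IsRoot.def, Polynomial.map_prod, eval_prod] at this
      obtain ⟨i, _, hi⟩ := Finset.prod_eq_zero_iff.1 this
      refine ⟨i, ?_⟩
      have : r ^ δ i - 1 = 0 := by simpa using hi
      linear_combination this
    obtain ⟨i, hi⟩ := hroot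
    have habs : ‖r‖ ^ δ i = 1 := by
      rw [← norm_pow, hi, norm_one]
    rcases pow_eq_one_iff_cases.mp habs with h | h | h
    · exact absurd h (hδ i).ne'
    · exact h
    · exfalso; nlinarith [norm_nonneg r, h.1]
  -- transfer coefficients
  have hdegPc : Pc.natDegree = n := by
    rw [hPc, hm₀.natDegree_map, natDegree_eq_of_degree_eq hdeg₀, hPdeg]
  have hnz : ∀ k, P.coeff k ≠ 0 ↔ Pc.coeff k ≠ 0 := by
    intro k
    rw [← hmap, hPc, coeff_map, coeff_map]
    constructor
    · intro h h0
      exact h (by rw [(map_eq_zero_iff _ (RingHom.injective _)).1 h0, map_zero])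
    · intro h h0
      exact h (by rw [(map_eq_zero_iff _ (algebraMap L K).injective).1 h0, map_zero])
  rw [hnz s, hnz (n - s), ← hdegPc]
  exact aux_C hPcm hroots (hdegPc ▸ hs)
end
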